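/- arXiv:1401.7504 — 2 statements merged into one kernel-verified Lean document; each statement's English description precedes it below -/
import Mathlib

section
/- Let p₁, p₂, p₃, p₄ ∈ ℂ³ be null lifts with ⟨pᵢ,pⱼ⟩ ≠ 0 for all i ≠ j, with cross-ratios 𝕏₁, 𝕏₂, 𝕏₃ and Cartan invariants 𝔸₁, 𝔸₂, 𝔸₃, 𝔸₄. Then: |𝕏₁ + 𝕏₂ − 1|² = 4·|𝕏₁|·|𝕏₂|·cos(𝔸₁)·cos(𝔸₄); |𝕏₁ + conj(𝕏₂) − 1|² = 4·|𝕏₁|·|𝕏₂|·cos(𝔸₂)·cos(𝔸₃); |𝕏₃ + 1/𝕏₁ − 1|² = 4·(|𝕏₃|/|𝕏₁|)·cos(𝔸₂)·cos(𝔸₄); |conj(𝕏₃) + 1/𝕏₁ − 1|² = 4·(|𝕏₃|/|𝕏₁|)·cos(𝔸₁)·cos(𝔸₃); |1/𝕏₂ + 1/𝕏₃ − 1|² = (4/(|𝕏₂|·|𝕏₃|))·cos(𝔸₃)·cos(𝔸₄); |1/𝕏₂ + 1/conj(𝕏₃) − 1|² = (4/(|𝕏₂|·|𝕏₃|))·cos(𝔸₁)·cos(𝔸₂).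 -/
noncomputable section

open Complex ComplexConjugate

/-- The Hermitian form of signature (2,1) on ℂ³. -/
def herm (z w : Fin 3 → ℂ) : ℂ :=
  z 0 * conj (w 2) + z 1 * conj (w 1) + z 2 * conj (w 0)

/-- A null lift: a nonzero vector with `⟨p,p⟩ = 0`. -/
def IsNullLift (p : Fin 3 → ℂ) : Prop := p ≠ 0 ∧ herm p p = 0

/-- The complex cross-ratio `𝕏(p,q,r,s) = (⟨r,p⟩·⟨s,q⟩)/(⟨s,p⟩·⟨r,q⟩)`. -/
def crossRatio (p q r s : Fin 3 → ℂ) : ℂ :=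
  (herm r p * herm s q) / (herm s p * herm r q)

/-- Cartan's angular invariant `𝔸(p,q,r) = arg(−⟨p,q⟩·⟨q,r⟩·⟨r,p⟩)`. -/
def cartan (p q r : Fin 3 → ℂ) : ℝ :=
  Complex.arg (-(herm p q * herm q r * herm r p))

lemma herm_conj' (z w : Fin 3 → ℂ) : conj (herm z w) = herm w z := by
  simp only [herm, map_add, map_mul, Complex.conj_conj]; ring

lemma main_aux (z D N u v : ℂ) (c : ℝ) (hD : D ≠ 0) (hu : u ≠ 0) (hv : v ≠ 0)
    (hzD : z * D = N)
    (hkey : N * conj N = (u + conj u) * (v + conj v))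
    (habs : ‖u‖ * ‖v‖ = c * ‖D‖ ^ 2) :
    ‖z‖ ^ 2 = 4 * c * Real.cos u.arg * Real.cos v.arg := by
  have hDa : ‖D‖ ≠ 0 := by simpa using hD
  have hua : ‖u‖ ≠ 0 := by simpa using hu
  have hva : ‖v‖ ≠ 0 := by simpa using hv
  have hN2 : ‖N‖ ^ 2 = 4 * u.re * v.re := by
    have h := hkey
    rw [Complex.mul_conj, Complex.add_conj, Complex.add_conj, ← Complex.ofReal_mul] at h
    have h' := Complex.ofReal_inj.mp h
    rw [Complex.sq_norm, h']; ring
  have hz2 : ‖z‖ ^ 2 * ‖D‖ ^ 2 = 4 * u.re * v.re := by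
    rw [← hN2, ← mul_pow, ← norm_mul, hzD]
  have hc : c = ‖u‖ * ‖v‖ / ‖D‖ ^ 2 := by
    rw [habs, mul_div_assoc, div_self (pow_ne_zero 2 hDa), mul_one]
  have h3 : ‖z‖ ^ 2 = 4 * u.re * v.re / ‖D‖ ^ 2 := by
    rw [eq_div_iff (pow_ne_zero 2 hDa)]; exact hz2
  rw [h3, hc, Complex.cos_arg hu, Complex.cos_arg hv]
  field_simp

set_option maxHeartbeats 4000000 in
/-- Relations between moduli of combinations of the cross-ratios and the
cosines of the Cartan angular invariants. -/
theorem crossRatio_cartan_identities (p : Fin 4 → Fin 3 → ℂ)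
    (hnull : ∀ i, IsNullLift (p i))
    (hne : ∀ i j, i ≠ j → herm (p i) (p j) ≠ 0)
    (X₁ X₂ X₃ : ℂ) (A₁ A₂ A₃ A₄ : ℝ)
    (hX₁ : X₁ = crossRatio (p 0) (p 1) (p 2) (p 3))
    (hX₂ : X₂ = crossRatio (p 0) (p 2) (p 1) (p 3))
    (hX₃ : X₃ = crossRatio (p 1) (p 2) (p 0) (p 3))
    (hA₁ : A₁ = cartan (p 1) (p 2) (p 3))
    (hA₂ : A₂ = cartan (p 0) (p 2) (p 3))
    (hA₃ : A₃ = cartan (p 0) (p 1) (p 3))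
    (hA₄ : A₄ = cartan (p 0) (p 1) (p 2)) :
    (‖X₁ + X₂ - 1‖) ^ 2 =
        4 * ‖X₁‖ * ‖X₂‖ * Real.cos A₁ * Real.cos A₄ ∧
    (‖X₁ + conj X₂ - 1‖) ^ 2 =
        4 * ‖X₁‖ * ‖X₂‖ * Real.cos A₂ * Real.cos A₃ ∧
    (‖X₃ + 1 / X₁ - 1‖) ^ 2 =
        4 * (‖X₃‖ / ‖X₁‖) * Real.cos A₂ * Real.cos A₄ ∧
    (‖conj X₃ + 1 / X₁ - 1‖) ^ 2 =
        4 * (‖X₃‖ / ‖X₁‖) * Real.cos A₁ * Real.cos A₃ ∧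
    (‖1 / X₂ + 1 / X₃ - 1‖) ^ 2 =
        4 / (‖X₂‖ * ‖X₃‖) * Real.cos A₃ * Real.cos A₄ ∧
    (‖1 / X₂ + 1 / conj X₃ - 1‖) ^ 2 =
        4 / (‖X₂‖ * ‖X₃‖) * Real.cos A₁ * Real.cos A₂ := by
  have h01 : herm (p 0) (p 1) ≠ 0 := hne 0 1 (by decide)
  have h02 : herm (p 0) (p 2) ≠ 0 := hne 0 2 (by decide)
  have h03 : herm (p 0) (p 3) ≠ 0 := hne 0 3 (by decide)
  have h10 : herm (p 1) (p 0) ≠ 0 := hne 1 0 (by decide)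
  have h12 : herm (p 1) (p 2) ≠ 0 := hne 1 2 (by decide)
  have h13 : herm (p 1) (p 3) ≠ 0 := hne 1 3 (by decide)
  have h20 : herm (p 2) (p 0) ≠ 0 := hne 2 0 (by decide)
  have h21 : herm (p 2) (p 1) ≠ 0 := hne 2 1 (by decide)
  have h23 : herm (p 2) (p 3) ≠ 0 := hne 2 3 (by decide)
  have h30 : herm (p 3) (p 0) ≠ 0 := hne 3 0 (by decide)
  have h31 : herm (p 3) (p 1) ≠ 0 := hne 3 1 (by decide)
  have h32 : herm (p 3) (p 2) ≠ 0 := hne 3 2 (by decide)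
  have hdetfull : herm (p 0) (p 0) * herm (p 1) (p 1) * herm (p 2) (p 2) * herm (p 3) (p 3) - herm (p 0) (p 0) * herm (p 1) (p 1) * herm (p 2) (p 3) * herm (p 3) (p 2) - herm (p 0) (p 0) * herm (p 1) (p 2) * herm (p 2) (p 1) * herm (p 3) (p 3) + herm (p 0) (p 0) * herm (p 1) (p 2) * herm (p 2) (p 3) * herm (p 3) (p 1) + herm (p 0) (p 0) * herm (p 1) (p 3) * herm (p 2) (p 1) * herm (p 3) (p 2) - herm (p 0) (p 0) * herm (p 1) (p 3) * herm (p 2) (p 2) * herm (p 3) (p 1) - herm (p 0) (p 1) * herm (p 1) (p 0) * herm (p 2) (p 2) * herm (p 3) (p 3) + herm (p 0) (p 1) * herm (p 1) (p 0) * herm (p 2) (p 3) * herm (p 3) (p 2) + herm (p 0) (p 1) * herm (p 1) (p 2) * herm (p 2) (p 0) * herm (p 3) (p 3) - herm (p 0) (p 1) * herm (p 1) (p 2) * herm (p 2) (p 3) * herm (p 3) (p 0) - herm (p 0) (p 1) * herm (p 1) (p 3) * herm (p 2) (p 0) * herm (p 3) (p 2) + herm (p 0) (p 1) * herm (p 1)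 (p 3) * herm (p 2) (p 2) * herm (p 3) (p 0) + herm (p 0) (p 2) * herm (p 1) (p 0) * herm (p 2) (p 1) * herm (p 3) (p 3) - herm (p 0) (p 2) * herm (p 1) (p 0) * herm (p 2) (p 3) * herm (p 3) (p 1) - herm (p 0) (p 2) * herm (p 1) (p 1) * herm (p 2) (p 0) * herm (p 3) (p 3) + herm (p 0) (p 2) * herm (p 1) (p 1) * herm (p 2) (p 3) * herm (p 3) (p 0) + herm (p 0) (p 2) * herm (p 1) (p 3) * herm (p 2) (p 0) * herm (p 3) (p 1) - herm (p 0) (p 2) * herm (p 1) (p 3) * herm (p 2) (p 1) * herm (p 3) (p 0) - herm (p 0) (p 3) * herm (p 1) (p 0) * herm (p 2) (p 1) * herm (p 3) (p 2) + herm (p 0) (p 3) * herm (p 1) (p 0) * herm (p 2) (p 2) * herm (p 3) (p 1) + herm (p 0) (p 3) * herm (p 1) (p 1) * herm (p 2) (p 0) * herm (p 3) (p 2) - herm (p 0) (p 3) * herm (p 1) (p 1) * herm (p 2) (p 2) * herm (p 3) (p 0) - herm (p 0) (p 3) * herm (p 1) (p 2) * herm (p 2) (p 0) * herm (p 3) (p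 1) + herm (p 0) (p 3) * herm (p 1) (p 2) * herm (p 2) (p 1) * herm (p 3) (p 0) = 0 := by
    simp only [herm]; ring
  rw [(hnull 0).2] at hdetfull
  rw [(hnull 1).2] at hdetfull
  rw [(hnull 2).2] at hdetfull
  rw [(hnull 3).2] at hdetfull
  have hdet : herm (p 0) (p 1) * herm (p 1) (p 0) * herm (p 2) (p 3) * herm (p 3) (p 2) - herm (p 0) (p 1) * herm (p 1) (p 2) * herm (p 2) (p 3) * herm (p 3) (p 0) - herm (p 0) (p 1) * herm (p 1) (p 3) * herm (p 2) (p 0) * herm (p 3) (p 2) - herm (p 0) (p 2) * herm (p 1) (p 0) * herm (p 2) (p 3) * herm (p 3) (p 1) + herm (p 0) (p 2) * herm (p 1) (p 3) * herm (p 2) (p 0) * herm (p 3) (p 1) - herm (p 0) (p 2) * herm (p 1) (p 3) * herm (p 2) (p 1) * herm (p 3) (p 0) - herm (p 0) (p 3) * herm (p 1) (p 0) * herm (p 2) (p 1) * herm (p 3) (p 2) - herm (p 0) (p 3) * herm (p 1) (p 2) * herm (p 2) (p 0) * herm (p 3) (p 1) + herm (p 0) (p 3) * herm (p 1) (p 2)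 * herm (p 2) (p 1) * herm (p 3) (p 0) = 0 := by linear_combination hdetfull
  have hv1 : (-(herm (p 1) (p 2) * herm (p 2) (p 3) * herm (p 3) (p 1))) ≠ 0 := neg_ne_zero.mpr (mul_ne_zero (mul_ne_zero h12 h23) h31)
  have hv2 : (-(herm (p 0) (p 2) * herm (p 2) (p 3) * herm (p 3) (p 0))) ≠ 0 := neg_ne_zero.mpr (mul_ne_zero (mul_ne_zero h02 h23) h30)
  have hv3 : (-(herm (p 0) (p 1) * herm (p 1) (p 3) * herm (p 3) (p 0))) ≠ 0 := neg_ne_zero.mpr (mul_ne_zero (mul_ne_zero h01 h13) h30)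
  have hv4 : (-(herm (p 0) (p 1) * herm (p 1) (p 2) * herm (p 2) (p 0))) ≠ 0 := neg_ne_zero.mpr (mul_ne_zero (mul_ne_zero h01 h12) h20)
  have hs : ∀ i j : Fin 4, ‖herm (p j) (p i)‖ = ‖herm (p i) (p j)‖ := fun i j => by rw [← herm_conj' (p i) (p j), Complex.norm_conj]
  have ha01 : ‖herm (p 0) (p 1)‖ ≠ 0 := by simpa using h01
  have ha02 : ‖herm (p 0) (p 2)‖ ≠ 0 := by simpa using h02
  have ha03 : ‖herm (p 0) (p 3)‖ ≠ 0 := by simpa using h03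
  have ha12 : ‖herm (p 1) (p 2)‖ ≠ 0 := by simpa using h12
  have ha13 : ‖herm (p 1) (p 3)‖ ≠ 0 := by simpa using h13
  have ha23 : ‖herm (p 2) (p 3)‖ ≠ 0 := by simpa using h23
  have hzD1 : (X₁ + X₂ - 1) * (herm (p 3) (p 0) * herm (p 2) (p 1) * herm (p 1) (p 2)) = herm (p 2) (p 0) * herm (p 3) (p 1) * herm (p 1) (p 2) + herm (p 1) (p 0) * herm (p 3) (p 2) * herm (p 2) (p 1) - herm (p 3) (p 0) * herm (p 2) (p 1) * herm (p 1) (p 2) := by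
    simp only [hX₁, hX₂, hX₃, crossRatio, map_div₀, map_mul, herm_conj']
    field_simp
  have hkey1 : (herm (p 2) (p 0) * herm (p 3) (p 1) * herm (p 1) (p 2) + herm (p 1) (p 0) * herm (p 3) (p 2) * herm (p 2) (p 1) - herm (p 3) (p 0) * herm (p 2) (p 1) * herm (p 1) (p 2)) * conj (herm (p 2) (p 0) * herm (p 3) (p 1) * herm (p 1) (p 2) + herm (p 1) (p 0) * herm (p 3) (p 2) * herm (p 2) (p 1) - herm (p 3) (p 0) * herm (p 2) (p 1) * herm (p 1) (p 2)) = ((-(herm (p 1) (p 2) * herm (p 2) (p 3) * herm (p 3) (p 1))) + conj (-(herm (p 1) (p 2) * herm (p 2) (p 3) * herm (p 3) (p 1)))) * ((-(herm (p 0) (p 1) * herm (p 1) (p 2) * herm (p 2) (p 0))) + conj (-(herm (p 0) (p 1) * herm (p 1) (p 2) * herm (p 2) (p 0)))) := by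
    simp only [map_add, map_sub, map_mul, map_neg, herm_conj']
    linear_combination (herm (p 1) (p 2) * herm (p 2) (p 1)) * hdet
  have habs1 : ‖-(herm (p 1) (p 2) * herm (p 2) (p 3) * herm (p 3) (p 1))‖ * ‖-(herm (p 0) (p 1) * herm (p 1) (p 2) * herm (p 2) (p 0))‖ = (‖X₁‖ * ‖X₂‖) * ‖herm (p 3) (p 0) * herm (p 2) (p 1) * herm (p 1) (p 2)‖ ^ 2 := by
    simp only [hX₁, hX₂, hX₃, crossRatio, norm_div, norm_mul, norm_neg]
    simp only [hs 0 1, hs 0 2, hs 0 3, hs 1 2, hs 1 3, hs 2 3]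
    field_simp
  have hD1 : (herm (p 3) (p 0) * herm (p 2) (p 1) * herm (p 1) (p 2)) ≠ 0 := mul_ne_zero (mul_ne_zero h30 h21) h12
  have hmain1 := main_aux _ _ _ _ _ _ hD1 hv1 hv4 hzD1 hkey1 habs1
  have hzD2 : (X₁ + conj X₂ - 1) * (herm (p 3) (p 0) * herm (p 0) (p 3) * herm (p 2) (p 1)) = herm (p 2) (p 0) * herm (p 3) (p 1) * herm (p 0) (p 3) + herm (p 0) (p 1) * herm (p 2) (p 3) * herm (p 3) (p 0) - herm (p 3) (p 0) * herm (p 0) (p 3) * herm (p 2) (p 1) := by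
    simp only [hX₁, hX₂, hX₃, crossRatio, map_div₀, map_mul, herm_conj']
    field_simp
  have hkey2 : (herm (p 2) (p 0) * herm (p 3) (p 1) * herm (p 0) (p 3) + herm (p 0) (p 1) * herm (p 2) (p 3) * herm (p 3) (p 0) - herm (p 3) (p 0) * herm (p 0) (p 3) * herm (p 2) (p 1)) * conj (herm (p 2) (p 0) * herm (p 3) (p 1) * herm (p 0) (p 3) + herm (p 0) (p 1) * herm (p 2) (p 3) * herm (p 3) (p 0) - herm (p 3) (p 0) * herm (p 0) (p 3) * herm (p 2) (p 1)) = ((-(herm (p 0) (p 2) * herm (p 2) (p 3) * herm (p 3) (p 0))) + conj (-(herm (p 0) (p 2) * herm (p 2) (p 3) * herm (p 3) (p 0)))) * ((-(herm (p 0) (p 1) * herm (p 1) (p 3) * herm (p 3) (p 0))) + conj (-(herm (p 0) (p 1) * herm (p 1) (p 3) * herm (p 3) (p 0)))) := by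
    simp only [map_add, map_sub, map_mul, map_neg, herm_conj']
    linear_combination (herm (p 0) (p 3) * herm (p 3) (p 0)) * hdet
  have habs2 : ‖-(herm (p 0) (p 2) * herm (p 2) (p 3) * herm (p 3) (p 0))‖ * ‖-(herm (p 0) (p 1) * herm (p 1) (p 3) * herm (p 3) (p 0))‖ = (‖X₁‖ * ‖X₂‖) * ‖herm (p 3) (p 0) * herm (p 0) (p 3) * herm (p 2) (p 1)‖ ^ 2 := by
    simp only [hX₁, hX₂, hX₃, crossRatio, norm_div, norm_mul, norm_neg]
    simp only [hs 0 1, hs 0 2, hs 0 3, hs 1 2, hs 1 3, hs 2 3]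
    field_simp
  have hD2 : (herm (p 3) (p 0) * herm (p 0) (p 3) * herm (p 2) (p 1)) ≠ 0 := mul_ne_zero (mul_ne_zero h30 h03) h21
  have hmain2 := main_aux _ _ _ _ _ _ hD2 hv2 hv3 hzD2 hkey2 habs2
  have hzD3 : (X₃ + 1 / X₁ - 1) * (herm (p 2) (p 0) * herm (p 3) (p 1) * herm (p 0) (p 2)) = herm (p 0) (p 1) * herm (p 3) (p 2) * herm (p 2) (p 0) + herm (p 3) (p 0) * herm (p 2) (p 1) * herm (p 0) (p 2) - herm (p 2) (p 0) * herm (p 3) (p 1) * herm (p 0) (p 2) := by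
    simp only [hX₁, hX₂, hX₃, crossRatio, map_div₀, map_mul, herm_conj']
    field_simp
  have hkey3 : (herm (p 0) (p 1) * herm (p 3) (p 2) * herm (p 2) (p 0) + herm (p 3) (p 0) * herm (p 2) (p 1) * herm (p 0) (p 2) - herm (p 2) (p 0) * herm (p 3) (p 1) * herm (p 0) (p 2)) * conj (herm (p 0) (p 1) * herm (p 3) (p 2) * herm (p 2) (p 0) + herm (p 3) (p 0) * herm (p 2) (p 1) * herm (p 0) (p 2) - herm (p 2) (p 0) * herm (p 3) (p 1) * herm (p 0) (p 2)) = ((-(herm (p 0) (p 2) * herm (p 2) (p 3) * herm (p 3) (p 0))) + conj (-(herm (p 0) (p 2) * herm (p 2) (p 3) * herm (p 3) (p 0)))) * ((-(herm (p 0) (p 1) * herm (p 1) (p 2) * herm (p 2) (p 0))) + conj (-(herm (p 0) (p 1) * herm (p 1) (p 2) * herm (p 2) (p 0)))) := by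
    simp only [map_add, map_sub, map_mul, map_neg, herm_conj']
    linear_combination (herm (p 0) (p 2) * herm (p 2) (p 0)) * hdet
  have habs3 : ‖-(herm (p 0) (p 2) * herm (p 2) (p 3) * herm (p 3) (p 0))‖ * ‖-(herm (p 0) (p 1) * herm (p 1) (p 2) * herm (p 2) (p 0))‖ = (‖X₃‖ / ‖X₁‖) * ‖herm (p 2) (p 0) * herm (p 3) (p 1) * herm (p 0) (p 2)‖ ^ 2 := by
    simp only [hX₁, hX₂, hX₃, crossRatio, norm_div, norm_mul, norm_neg]
    simp only [hs 0 1, hs 0 2, hs 0 3, hs 1 2, hs 1 3, hs 2 3]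
    field_simp
  have hD3 : (herm (p 2) (p 0) * herm (p 3) (p 1) * herm (p 0) (p 2)) ≠ 0 := mul_ne_zero (mul_ne_zero h20 h31) h02
  have hmain3 := main_aux _ _ _ _ _ _ hD3 hv2 hv4 hzD3 hkey3 habs3
  have hzD4 : (conj X₃ + 1 / X₁ - 1) * (herm (p 2) (p 0) * herm (p 1) (p 3) * herm (p 3) (p 1)) = herm (p 1) (p 0) * herm (p 2) (p 3) * herm (p 3) (p 1) + herm (p 3) (p 0) * herm (p 2) (p 1) * herm (p 1) (p 3) - herm (p 2) (p 0) * herm (p 1) (p 3) * herm (p 3) (p 1) := by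
    simp only [hX₁, hX₂, hX₃, crossRatio, map_div₀, map_mul, herm_conj']
    field_simp
  have hkey4 : (herm (p 1) (p 0) * herm (p 2) (p 3) * herm (p 3) (p 1) + herm (p 3) (p 0) * herm (p 2) (p 1) * herm (p 1) (p 3) - herm (p 2) (p 0) * herm (p 1) (p 3) * herm (p 3) (p 1)) * conj (herm (p 1) (p 0) * herm (p 2) (p 3) * herm (p 3) (p 1) + herm (p 3) (p 0) * herm (p 2) (p 1) * herm (p 1) (p 3) - herm (p 2) (p 0) * herm (p 1) (p 3) * herm (p 3) (p 1)) = ((-(herm (p 1) (p 2) * herm (p 2) (p 3) * herm (p 3) (p 1))) + conj (-(herm (p 1) (p 2) * herm (p 2) (p 3) * herm (p 3) (p 1)))) * ((-(herm (p 0) (p 1) * herm (p 1) (p 3) * herm (p 3) (p 0))) + conj (-(herm (p 0) (p 1) * herm (p 1) (p 3) * herm (p 3) (p 0)))) := by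
    simp only [map_add, map_sub, map_mul, map_neg, herm_conj']
    linear_combination (herm (p 1) (p 3) * herm (p 3) (p 1)) * hdet
  have habs4 : ‖-(herm (p 1) (p 2) * herm (p 2) (p 3) * herm (p 3) (p 1))‖ * ‖-(herm (p 0) (p 1) * herm (p 1) (p 3) * herm (p 3) (p 0))‖ = (‖X₃‖ / ‖X₁‖) * ‖herm (p 2) (p 0) * herm (p 1) (p 3) * herm (p 3) (p 1)‖ ^ 2 := by
    simp only [hX₁, hX₂, hX₃, crossRatio, norm_div, norm_mul, norm_neg]
    simp only [hs 0 1, hs 0 2, hs 0 3, hs 1 2, hs 1 3, hs 2 3]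
    field_simp
  have hD4 : (herm (p 2) (p 0) * herm (p 1) (p 3) * herm (p 3) (p 1)) ≠ 0 := mul_ne_zero (mul_ne_zero h20 h13) h31
  have hmain4 := main_aux _ _ _ _ _ _ hD4 hv1 hv3 hzD4 hkey4 habs4
  have hzD5 : (1 / X₂ + 1 / X₃ - 1) * (herm (p 1) (p 0) * herm (p 0) (p 1) * herm (p 3) (p 2)) = herm (p 3) (p 0) * herm (p 1) (p 2) * herm (p 0) (p 1) + herm (p 3) (p 1) * herm (p 0) (p 2) * herm (p 1) (p 0) - herm (p 1) (p 0) * herm (p 0) (p 1) * herm (p 3) (p 2) := by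
    simp only [hX₁, hX₂, hX₃, crossRatio, map_div₀, map_mul, herm_conj']
    field_simp
  have hkey5 : (herm (p 3) (p 0) * herm (p 1) (p 2) * herm (p 0) (p 1) + herm (p 3) (p 1) * herm (p 0) (p 2) * herm (p 1) (p 0) - herm (p 1) (p 0) * herm (p 0) (p 1) * herm (p 3) (p 2)) * conj (herm (p 3) (p 0) * herm (p 1) (p 2) * herm (p 0) (p 1) + herm (p 3) (p 1) * herm (p 0) (p 2) * herm (p 1) (p 0) - herm (p 1) (p 0) * herm (p 0) (p 1) * herm (p 3) (p 2)) = ((-(herm (p 0) (p 1) * herm (p 1) (p 3) * herm (p 3) (p 0))) + conj (-(herm (p 0) (p 1) * herm (p 1) (p 3) * herm (p 3) (p 0)))) * ((-(herm (p 0) (p 1) * herm (p 1) (p 2) * herm (p 2) (p 0))) + conj (-(herm (p 0) (p 1) * herm (p 1) (p 2) * herm (p 2) (p 0)))) := by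
    simp only [map_add, map_sub, map_mul, map_neg, herm_conj']
    linear_combination (herm (p 0) (p 1) * herm (p 1) (p 0)) * hdet
  have habs5 : ‖-(herm (p 0) (p 1) * herm (p 1) (p 3) * herm (p 3) (p 0))‖ * ‖-(herm (p 0) (p 1) * herm (p 1) (p 2) * herm (p 2) (p 0))‖ = (1 / (‖X₂‖ * ‖X₃‖)) * ‖herm (p 1) (p 0) * herm (p 0) (p 1) * herm (p 3) (p 2)‖ ^ 2 := by
    simp only [hX₁, hX₂, hX₃, crossRatio, norm_div, norm_mul, norm_neg]
    simp only [hs 0 1, hs 0 2, hs 0 3, hs 1 2, hs 1 3, hs 2 3]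
    field_simp
  have hD5 : (herm (p 1) (p 0) * herm (p 0) (p 1) * herm (p 3) (p 2)) ≠ 0 := mul_ne_zero (mul_ne_zero h10 h01) h32
  have hmain5 := main_aux _ _ _ _ _ _ hD5 hv3 hv4 hzD5 hkey5 habs5
  have hzD6 : (1 / X₂ + 1 / conj X₃ - 1) * (herm (p 1) (p 0) * herm (p 3) (p 2) * herm (p 2) (p 3)) = herm (p 3) (p 0) * herm (p 1) (p 2) * herm (p 2) (p 3) + herm (p 1) (p 3) * herm (p 2) (p 0) * herm (p 3) (p 2) - herm (p 1) (p 0) * herm (p 3) (p 2) * herm (p 2) (p 3) := by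
    simp only [hX₁, hX₂, hX₃, crossRatio, map_div₀, map_mul, herm_conj']
    field_simp
  have hkey6 : (herm (p 3) (p 0) * herm (p 1) (p 2) * herm (p 2) (p 3) + herm (p 1) (p 3) * herm (p 2) (p 0) * herm (p 3) (p 2) - herm (p 1) (p 0) * herm (p 3) (p 2) * herm (p 2) (p 3)) * conj (herm (p 3) (p 0) * herm (p 1) (p 2) * herm (p 2) (p 3) + herm (p 1) (p 3) * herm (p 2) (p 0) * herm (p 3) (p 2) - herm (p 1) (p 0) * herm (p 3) (p 2) * herm (p 2) (p 3)) = ((-(herm (p 1) (p 2) * herm (p 2) (p 3) * herm (p 3) (p 1))) + conj (-(herm (p 1) (p 2) * herm (p 2) (p 3) * herm (p 3) (p 1)))) * ((-(herm (p 0) (p 2) * herm (p 2) (p 3) * herm (p 3) (p 0))) + conj (-(herm (p 0) (p 2) * herm (p 2) (p 3) * herm (p 3) (p 0)))) := by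
    simp only [map_add, map_sub, map_mul, map_neg, herm_conj']
    linear_combination (herm (p 2) (p 3) * herm (p 3) (p 2)) * hdet
  have habs6 : ‖-(herm (p 1) (p 2) * herm (p 2) (p 3) * herm (p 3) (p 1))‖ * ‖-(herm (p 0) (p 2) * herm (p 2) (p 3) * herm (p 3) (p 0))‖ = (1 / (‖X₂‖ * ‖X₃‖)) * ‖herm (p 1) (p 0) * herm (p 3) (p 2) * herm (p 2) (p 3)‖ ^ 2 := by
    simp only [hX₁, hX₂, hX₃, crossRatio, norm_div, norm_mul, norm_neg]
    simp only [hs 0 1, hs 0 2, hs 0 3, hs 1 2, hs 1 3, hs 2 3]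
    field_simp
  have hD6 : (herm (p 1) (p 0) * herm (p 3) (p 2) * herm (p 2) (p 3)) ≠ 0 := mul_ne_zero (mul_ne_zero h10 h32) h23
  have hmain6 := main_aux _ _ _ _ _ _ hD6 hv1 hv2 hzD6 hkey6 habs6
  rw [hA₁, hA₂, hA₃, hA₄]
  simp only [cartan]
  refine ⟨?_, ?_, ?_, ?_, ?_, ?_⟩
  · linear_combination hmain1
  · linear_combination hmain2
  · linear_combination hmain3
  · linear_combination hmain4
  · linear_combination hmain5
  · linear_combination hmain6
end
end

section
/- Let p₁, p₂, p₃, p₄ ∈ ℂ³ be null lifts with ⟨pᵢ,pⱼ⟩ ≠ 0 for all i ≠ j, with cross-ratios 𝕏₁, 𝕏₂, 𝕏₃ and Cartan invariants 𝔸₁, 𝔸₂, 𝔸₃, 𝔸₄. Then 𝕏₁/|𝕏₁| = exp(i·(𝔸₁ − 𝔸₂)), 𝕏₂/|𝕏₂| = exp(−i·(𝔸₂ + 𝔸₄)), 𝕏₃/|𝕏₃| = exp(i·(𝔸₄ − 𝔸₁)), and exp(i·𝔸₃) = exp(i·(𝔸₂ − 𝔸₁ + 𝔸₄)). -/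
noncomputable section

open Complex ComplexConjugate

lemma herm_swap (z w : Fin 3 → ℂ) : herm w z = conj (herm z w) := by
  simp only [herm, map_add, map_mul, Complex.conj_conj]
  ring

lemma div_abs (z : ℂ) (hz : z ≠ 0) :
    z / (‖z‖ : ℂ) = Complex.exp (Complex.I * (Complex.arg z : ℂ)) := by
  have h := Complex.norm_mul_exp_arg_mul_I z
  have ha : (‖z‖ : ℂ) ≠ 0 := by exact_mod_cast norm_ne_zero_iff.mpr hz
  field_simp
  rw [mul_comm Complex.I]
  linear_combination -h

lemma conj_div_abs (z : ℂ) (hz : z ≠ 0) :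
    conj z / (‖z‖ : ℂ) = Complex.exp (-(Complex.I * (Complex.arg z : ℂ))) := by
  have : conj z / (‖z‖ : ℂ) = conj (z / (‖z‖ : ℂ)) := by
    rw [map_div₀]; norm_num
  rw [this, div_abs z hz, ← Complex.exp_conj]
  congr 1
  simp

lemma key3 (x z w u : ℂ) (hz : z ≠ 0) (hw : w ≠ 0) (hu : u ≠ 0) (r : ℝ) (hr : 0 < r)
    (hx : x = (r : ℂ) * (z * conj w * u)) :
    x / ((‖x‖ : ℝ) : ℂ) =
      Complex.exp (Complex.I * ((Complex.arg z - Complex.arg w + Complex.arg u : ℝ) : ℂ)) := by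
  have hr' : (r : ℂ) ≠ 0 := by exact_mod_cast hr.ne'
  have hwc : conj w ≠ 0 := by simpa using hw
  have habs : ((‖x‖ : ℝ) : ℂ) =
      (r : ℂ) * ((‖z‖ : ℂ) * (‖w‖ : ℂ) * (‖u‖ : ℂ)) := by
    rw [hx]
    push_cast
    simp [map_mul, Complex.norm_conj, Complex.norm_real, _root_.abs_of_pos hr]
  have hz' : (‖z‖ : ℂ) ≠ 0 := by exact_mod_cast norm_ne_zero_iff.mpr hz
  have hw' : (‖w‖ : ℂ) ≠ 0 := by exact_mod_cast norm_ne_zero_iff.mpr hw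
  have hu' : (‖u‖ : ℂ) ≠ 0 := by exact_mod_cast norm_ne_zero_iff.mpr hu
  have hsplit : x / ((‖x‖ : ℝ) : ℂ) =
      (z / (‖z‖ : ℂ)) * (conj w / (‖w‖ : ℂ)) * (u / (‖u‖ : ℂ)) := by
    rw [habs, hx]
    field_simp
  rw [hsplit, div_abs z hz, conj_div_abs w hw, div_abs u hu,
    ← Complex.exp_add, ← Complex.exp_add]
  congr 1
  push_cast
  ring

lemma key2 (x z w : ℂ) (hz : z ≠ 0) (hw : w ≠ 0) (r : ℝ) (hr : 0 < r)
    (hx : x = (r : ℂ) * (conj z * conj w)) :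
    x / ((‖x‖ : ℝ) : ℂ) =
      Complex.exp (-(Complex.I * ((Complex.arg z + Complex.arg w : ℝ) : ℂ))) := by
  have hr' : (r : ℂ) ≠ 0 := by exact_mod_cast hr.ne'
  have habs : ((‖x‖ : ℝ) : ℂ) =
      (r : ℂ) * ((‖z‖ : ℂ) * (‖w‖ : ℂ)) := by
    rw [hx]
    push_cast
    simp [map_mul, Complex.norm_conj, Complex.norm_real, _root_.abs_of_pos hr]
  have hz' : (‖z‖ : ℂ) ≠ 0 := by exact_mod_cast norm_ne_zero_iff.mpr hz
  have hw' : (‖w‖ : ℂ) ≠ 0 := by exact_mod_cast norm_ne_zero_iff.mpr hw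
  have hsplit : x / ((‖x‖ : ℝ) : ℂ) =
      (conj z / (‖z‖ : ℂ)) * (conj w / (‖w‖ : ℂ)) := by
    rw [habs, hx]
    field_simp
  rw [hsplit, conj_div_abs z hz, conj_div_abs w hw, ← Complex.exp_add]
  congr 1
  push_cast
  ring

/-- The arguments of the cross-ratios in terms of the Cartan angular
invariants: `arg 𝕏₁ = 𝔸₁ − 𝔸₂`, `arg 𝕏₂ = −(𝔸₂ + 𝔸₄)`, `arg 𝕏₃ = 𝔸₄ − 𝔸₁`,
and `𝔸₃ = 𝔸₂ − 𝔸₁ + 𝔸₄ (mod 2π)`. -/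
theorem arg_crossRatio_eq_cartan (p : Fin 4 → Fin 3 → ℂ)
    (hnull : ∀ i, IsNullLift (p i))
    (hne : ∀ i j, i ≠ j → herm (p i) (p j) ≠ 0)
    (X₁ X₂ X₃ : ℂ) (A₁ A₂ A₃ A₄ : ℝ)
    (hX₁ : X₁ = crossRatio (p 0) (p 1) (p 2) (p 3))
    (hX₂ : X₂ = crossRatio (p 0) (p 2) (p 1) (p 3))
    (hX₃ : X₃ = crossRatio (p 1) (p 2) (p 0) (p 3))
    (hA₁ : A₁ = cartan (p 1) (p 2) (p 3))
    (hA₂ : A₂ = cartan (p 0) (p 2) (p 3))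
    (hA₃ : A₃ = cartan (p 0) (p 1) (p 3))
    (hA₄ : A₄ = cartan (p 0) (p 1) (p 2)) :
    X₁ / ((‖X₁‖ : ℝ) : ℂ) = Complex.exp (Complex.I * ((A₁ - A₂ : ℝ) : ℂ)) ∧
    X₂ / ((‖X₂‖ : ℝ) : ℂ) = Complex.exp (-(Complex.I * ((A₂ + A₄ : ℝ) : ℂ))) ∧
    X₃ / ((‖X₃‖ : ℝ) : ℂ) = Complex.exp (Complex.I * ((A₄ - A₁ : ℝ) : ℂ)) ∧
    Complex.exp (Complex.I * (A₃ : ℂ)) =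
      Complex.exp (Complex.I * ((A₂ - A₁ + A₄ : ℝ) : ℂ)) := by
  -- abbreviations for the six Hermitian products
  set a := herm (p 0) (p 1) with ha_def
  set b := herm (p 0) (p 2) with hb_def
  set c := herm (p 0) (p 3) with hc_def
  set d := herm (p 1) (p 2) with hd_def
  set e := herm (p 1) (p 3) with he_def
  set f := herm (p 2) (p 3) with hf_def
  have ha : a ≠ 0 := hne 0 1 (by decide)
  have hb : b ≠ 0 := hne 0 2 (by decide)
  have hc : c ≠ 0 := hne 0 3 (by decide)
  have hd : d ≠ 0 := hne 1 2 (by decide)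
  have he : e ≠ 0 := hne 1 3 (by decide)
  have hf : f ≠ 0 := hne 2 3 (by decide)
  have s10 : herm (p 1) (p 0) = conj a := herm_swap _ _
  have s20 : herm (p 2) (p 0) = conj b := herm_swap _ _
  have s30 : herm (p 3) (p 0) = conj c := herm_swap _ _
  have s21 : herm (p 2) (p 1) = conj d := herm_swap _ _
  have s31 : herm (p 3) (p 1) = conj e := herm_swap _ _
  have s32 : herm (p 3) (p 2) = conj f := herm_swap _ _
  -- the four Cartan triple products
  set T₁ : ℂ := -(d * f * conj e) with hT₁_def
  set T₂ : ℂ := -(b * f * conj c) with hT₂_def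
  set T₃ : ℂ := -(a * e * conj c) with hT₃_def
  set T₄ : ℂ := -(a * d * conj b) with hT₄_def
  have hT₁ : T₁ ≠ 0 := by
    simp only [hT₁_def, neg_ne_zero]
    exact mul_ne_zero (mul_ne_zero hd hf) (by simpa using he)
  have hT₂ : T₂ ≠ 0 := by
    simp only [hT₂_def, neg_ne_zero]
    exact mul_ne_zero (mul_ne_zero hb hf) (by simpa using hc)
  have hT₃ : T₃ ≠ 0 := by
    simp only [hT₃_def, neg_ne_zero]
    exact mul_ne_zero (mul_ne_zero ha he) (by simpa using hc)
  have hT₄ : T₄ ≠ 0 := by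
    simp only [hT₄_def, neg_ne_zero]
    exact mul_ne_zero (mul_ne_zero ha hd) (by simpa using hb)
  have hA₁' : A₁ = Complex.arg T₁ := by rw [hA₁, cartan, s31, hT₁_def]
  have hA₂' : A₂ = Complex.arg T₂ := by rw [hA₂, cartan, s30, hT₂_def]
  have hA₃' : A₃ = Complex.arg T₃ := by rw [hA₃, cartan, s30, hT₃_def]
  have hA₄' : A₄ = Complex.arg T₄ := by rw [hA₄, cartan, s20, hT₄_def]
  have hcc : c * conj c = ((Complex.normSq c : ℝ) : ℂ) := Complex.mul_conj c
  have hdd : d * conj d = ((Complex.normSq d : ℝ) : ℂ) := Complex.mul_conj d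
  have hff : f * conj f = ((Complex.normSq f : ℝ) : ℂ) := Complex.mul_conj f
  have hbb : b * conj b = ((Complex.normSq b : ℝ) : ℂ) := Complex.mul_conj b
  have hee : e * conj e = ((Complex.normSq e : ℝ) : ℂ) := Complex.mul_conj e
  have hnb : (0:ℝ) < Complex.normSq b := Complex.normSq_pos.mpr hb
  have hnc : (0:ℝ) < Complex.normSq c := Complex.normSq_pos.mpr hc
  have hnd : (0:ℝ) < Complex.normSq d := Complex.normSq_pos.mpr hd
  have hne' : (0:ℝ) < Complex.normSq e := Complex.normSq_pos.mpr he
  have hnf : (0:ℝ) < Complex.normSq f := Complex.normSq_pos.mpr hf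
  have hcne : conj c ≠ 0 := by simpa using hc
  have hdne : conj d ≠ 0 := by simpa using hd
  have hene : conj e ≠ 0 := by simpa using he
  have hbne : conj b ≠ 0 := by simpa using hb
  have hfne : conj f ≠ 0 := by simpa using hf
  refine ⟨?_, ?_, ?_, ?_⟩
  · -- X₁
    have r1pos : (0:ℝ) < (Complex.normSq c * Complex.normSq d * Complex.normSq f)⁻¹ :=
      inv_pos.mpr (by positivity)
    have hx : X₁ = (((Complex.normSq c * Complex.normSq d * Complex.normSq f)⁻¹ : ℝ) : ℂ) *
        (T₁ * conj T₂ * 1) := by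
      rw [hX₁, crossRatio, s20, s31, s30, s21, hT₁_def, hT₂_def]
      simp only [map_neg, map_mul, Complex.conj_conj]
      push_cast
      rw [← hcc, ← hdd, ← hff]
      field_simp [hcne, hdne, hfne]
    have h := key3 X₁ T₁ T₂ 1 hT₁ hT₂ one_ne_zero _ r1pos hx
    rw [hA₁', hA₂',
      show (T₁.arg - T₂.arg : ℝ) = (T₁.arg - T₂.arg + Complex.arg 1 : ℝ) by simp]
    exact h
  · -- X₂
    have r2pos : (0:ℝ) < (Complex.normSq b * Complex.normSq c * Complex.normSq d)⁻¹ :=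
      inv_pos.mpr (by positivity)
    have hx : X₂ = (((Complex.normSq b * Complex.normSq c * Complex.normSq d)⁻¹ : ℝ) : ℂ) *
        (conj T₂ * conj T₄) := by
      rw [hX₂, crossRatio, s10, s32, s30, hT₂_def, hT₄_def]
      simp only [map_neg, map_mul, Complex.conj_conj, ← hd_def]
      push_cast
      rw [← hbb, ← hcc, ← hdd]
      field_simp [hcne, hdne, hbne]
    rw [hA₂', hA₄']
    exact key2 X₂ T₂ T₄ hT₂ hT₄ _ r2pos hx
  · -- X₃
    have r3pos : (0:ℝ) < (Complex.normSq b * Complex.normSq d * Complex.normSq e)⁻¹ :=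
      inv_pos.mpr (by positivity)
    have hx : X₃ = (((Complex.normSq b * Complex.normSq d * Complex.normSq e)⁻¹ : ℝ) : ℂ) *
        (T₄ * conj T₁ * 1) := by
      rw [hX₃, crossRatio, s32, s31, hT₁_def, hT₄_def]
      simp only [map_neg, map_mul, Complex.conj_conj, ← ha_def, ← hb_def]
      push_cast
      rw [← hbb, ← hdd, ← hee]
      field_simp [hbne, hdne, hene]
    have h := key3 X₃ T₄ T₁ 1 hT₄ hT₁ one_ne_zero _ r3pos hx
    rw [hA₄', hA₁',
      show (T₄.arg - T₁.arg : ℝ) = (T₄.arg - T₁.arg + Complex.arg 1 : ℝ) by simp]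
    exact h
  · -- A₃
    have r4pos : (0:ℝ) < (Complex.normSq b * Complex.normSq d * Complex.normSq f)⁻¹ :=
      inv_pos.mpr (by positivity)
    have hx : T₃ = (((Complex.normSq b * Complex.normSq d * Complex.normSq f)⁻¹ : ℝ) : ℂ) *
        (T₂ * conj T₁ * T₄) := by
      rw [hT₃_def, hT₁_def, hT₂_def, hT₄_def]
      simp only [map_neg, map_mul, Complex.conj_conj]
      push_cast
      rw [← hbb, ← hdd, ← hff]
      field_simp [hbne, hdne, hfne]
    have := key3 T₃ T₂ T₁ T₄ hT₂ hT₁ hT₄ _ r4pos hx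
    rw [div_abs T₃ hT₃] at this
    rw [hA₃', hA₁', hA₂', hA₄']
    exact this
end
end
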